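/- arXiv:1701.05091 — 2 statements merged into one kernel-verified Lean document; each statement's English description precedes it below -/
import Mathlib

section
/- Let m ~ N(0,1) and a > 0. The equation E[|a·m|^α] = 1, i.e. a^α · 2^{α/2} Γ((α+1)/2)/√π = 1, has a (unique) solution α > 0 if and only if a < exp((1/2)(-ψ(1) + log 2)), where ψ is the digamma function. -/
open MeasureTheory Real Set Filter ProbabilityTheory

section Aux


noncomputable def tiG (a α : ℝ) : ℝ :=
  Real.log (Real.Gamma ((α + 1) / 2)) +
    ((Real.log a + Real.log 2 / 2) * α - Real.log (Real.sqrt Real.pi))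

lemma tiGamma_pos (α : ℝ) (hα : -1 < α) : 0 < Real.Gamma ((α + 1) / 2) :=
  Real.Gamma_pos_of_pos (by linarith)

lemma tiG_exp (a : ℝ) (ha : 0 < a) (α : ℝ) (hα : -1 < α) :
    Real.exp (tiG a α) =
      a ^ α * (2 : ℝ) ^ (α / 2) * Real.Gamma ((α + 1) / 2) / Real.sqrt Real.pi := by
  have hΓ := tiGamma_pos α hα
  rw [tiG, Real.exp_add, Real.exp_sub, Real.exp_log hΓ,
    Real.exp_log (Real.sqrt_pos.mpr Real.pi_pos)]
  have h1 : Real.exp ((Real.log a + Real.log 2 / 2) * α)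
      = a ^ α * (2 : ℝ) ^ (α / 2) := by
    rw [add_mul, Real.exp_add, Real.rpow_def_of_pos ha, Real.rpow_def_of_pos two_pos]
    ring_nf
  rw [h1]; ring

lemma tiG_zero (a : ℝ) : tiG a 0 = 0 := by
  norm_num [tiG, Real.Gamma_one_half_eq]


lemma ti_integral_aux (a : ℝ) (ha : 0 < a) {α : ℝ} (hα : 0 < α) :
    ∫ x, |a * x| ^ α ∂(ProbabilityTheory.gaussianReal 0 1) =
      a ^ α * (2 : ℝ) ^ (α / 2) * Real.Gamma ((α + 1) / 2) / Real.sqrt Real.pi := by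
  rw [ProbabilityTheory.gaussianReal_of_var_ne_zero 0 one_ne_zero]
  have hmeas : Measurable fun x => (gaussianPDFReal 0 1 x).toNNReal :=
    (ProbabilityTheory.measurable_gaussianPDFReal 0 1).real_toNNReal
  have hpdf : gaussianPDF 0 1 = fun x => ((gaussianPDFReal 0 1 x).toNNReal : ENNReal) := rfl
  rw [hpdf, integral_withDensity_eq_integral_smul hmeas]
  have hstep : ∀ x : ℝ, (gaussianPDFReal 0 1 x).toNNReal • |a * x| ^ α
      = (Real.sqrt (2 * Real.pi))⁻¹ * (a ^ α *
          (|x| ^ α * Real.exp (-(1/2) * |x| ^ (2:ℝ)))) := by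
    intro x
    rw [NNReal.smul_def, Real.coe_toNNReal _ (gaussianPDFReal_nonneg 0 1 x)]
    have habs : |x| ^ (2:ℝ) = x ^ 2 := by
      rw [show (2:ℝ) = ((2:ℕ):ℝ) by norm_num, Real.rpow_natCast, sq_abs]
    have hax : |a * x| ^ α = a ^ α * |x| ^ α := by
      rw [abs_mul, Real.mul_rpow (abs_nonneg a) (abs_nonneg x), abs_of_pos ha]
    rw [habs, hax, gaussianPDFReal]
    push_cast
    rw [smul_eq_mul]
    ring_nf
  rw [show (fun x => (gaussianPDFReal 0 1 x).toNNReal • |a * x| ^ α)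
      = fun x => (Real.sqrt (2 * Real.pi))⁻¹ * (a ^ α *
          (|x| ^ α * Real.exp (-(1/2) * |x| ^ (2:ℝ)))) from funext hstep]
  rw [integral_const_mul, integral_const_mul,
    integral_comp_abs (f := fun x => x ^ α * Real.exp (-(1/2) * x ^ (2:ℝ))),
    integral_rpow_mul_exp_neg_mul_rpow two_pos (by linarith) (by norm_num : (0:ℝ) < 1/2)]
  have h12 : ((1:ℝ)/2) ^ (-(α + 1) / 2) = (2:ℝ) ^ ((α + 1) / 2) := by
    rw [one_div, ← Real.rpow_neg_one (2:ℝ), ← Real.rpow_mul (by norm_num : (0:ℝ) ≤ 2)]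
    congr 1; ring
  rw [h12]
  have hs2 : Real.sqrt (2 * Real.pi) = (2:ℝ) ^ ((1:ℝ)/2) * Real.sqrt Real.pi := by
    rw [Real.sqrt_mul (by norm_num : (0:ℝ) ≤ 2), Real.sqrt_eq_rpow]
  have h2a : (2:ℝ) ^ ((α + 1) / 2) = (2:ℝ) ^ (α/2) * (2:ℝ) ^ ((1:ℝ)/2) := by
    rw [← Real.rpow_add two_pos]; congr 1; ring
  rw [hs2, h2a]
  have hne1 : ((2:ℝ) ^ ((1:ℝ)/2)) ≠ 0 := by positivity
  have hne2 : Real.sqrt Real.pi ≠ 0 := by positivity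
  field_simp



lemma tiG_convexOn (a : ℝ) : ConvexOn ℝ (Set.Ici 0) (tiG a) := by
  have h1 : ConvexOn ℝ (Set.Ici (0:ℝ))
      (fun α : ℝ => Real.log (Real.Gamma ((α + 1) / 2))) := by
    have hmap := Real.convexOn_log_Gamma.comp_affineMap
      (AffineMap.lineMap ((1:ℝ)/2) (1:ℝ))
    have happ : ∀ x : ℝ, (AffineMap.lineMap ((1:ℝ)/2) (1:ℝ)) x = (x + 1) / 2 := by
      intro x; rw [AffineMap.lineMap_apply]; simp; ring
    have hfun : ((Real.log ∘ Real.Gamma) ∘ (AffineMap.lineMap ((1:ℝ)/2) (1:ℝ)))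
        = fun α : ℝ => Real.log (Real.Gamma ((α + 1) / 2)) := by
      funext x
      rw [Function.comp_apply, Function.comp_apply, happ x]
    rw [hfun] at hmap
    refine hmap.subset (fun x hx => ?_) (convex_Ici 0)
    simp only [Set.mem_preimage, happ x, Set.mem_Ioi]
    have : (0:ℝ) ≤ x := hx
    linarith
  have h2 : ConvexOn ℝ (Set.Ici (0:ℝ))
      (fun α : ℝ => (Real.log a + Real.log 2 / 2) * α - Real.log (Real.sqrt Real.pi)) := by
    refine ⟨convex_Ici 0, fun x _ y _ p q hp hq hpq => ?_⟩
    simp only [smul_eq_mul]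
    exact le_of_eq (by linear_combination (Real.log (Real.sqrt Real.pi)) * hpq)
  exact h1.add h2

lemma tiG_hasDerivAt_zero (a : ℝ) :
    HasDerivAt (tiG a)
      (Real.log a - (Real.eulerMascheroniConstant + Real.log 2) / 2) 0 := by
  have h1 : HasDerivAt (fun α : ℝ => (α + 1) / 2) ((1:ℝ)/2) 0 := by
    simpa using ((hasDerivAt_id (0:ℝ)).add_const 1).div_const 2
  have h2 : HasDerivAt (fun α : ℝ => Real.Gamma ((α + 1) / 2))
      (-Real.sqrt Real.pi * (Real.eulerMascheroniConstant + 2 * Real.log 2) * (1/2)) 0 := by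
    have hpt : ((0:ℝ) + 1)/2 = 1/2 := by norm_num
    have hg : HasDerivAt Real.Gamma
        (-Real.sqrt Real.pi * (Real.eulerMascheroniConstant + 2 * Real.log 2))
        ((fun α : ℝ => (α + 1) / 2) 0) := by
      rw [show (fun α : ℝ => (α + 1) / 2) 0 = 1/2 by norm_num]
      exact Real.hasDerivAt_Gamma_one_half
    exact hg.comp 0 h1
  have hΓpos : (0:ℝ) < Real.Gamma ((0 + 1) / 2) := Real.Gamma_pos_of_pos (by norm_num)
  have h3 : HasDerivAt (fun α : ℝ => Real.log (Real.Gamma ((α + 1) / 2)))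
      (-Real.sqrt Real.pi * (Real.eulerMascheroniConstant + 2 * Real.log 2) * (1/2)
        / Real.Gamma ((0 + 1) / 2)) 0 := h2.log (ne_of_gt hΓpos)
  have h4 : HasDerivAt (fun α : ℝ =>
      (Real.log a + Real.log 2 / 2) * α - Real.log (Real.sqrt Real.pi))
      (Real.log a + Real.log 2 / 2) 0 := by
    simpa using ((hasDerivAt_id (0:ℝ)).const_mul (Real.log a + Real.log 2 / 2)).sub_const
      (Real.log (Real.sqrt Real.pi))
  have := h3.add h4
  refine this.congr_deriv ?_
  rw [show ((0:ℝ) + 1)/2 = 1/2 by norm_num, Real.Gamma_one_half_eq]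
  have hπ : Real.sqrt Real.pi ≠ 0 := by positivity
  field_simp
  ring




lemma tiG_continuousOn (a : ℝ) : ContinuousOn (tiG a) (Set.Ici 0) := by
  intro x hx
  have hx0 : (0:ℝ) ≤ x := hx
  have hpos : 0 < (x + 1) / 2 := by linarith
  have hΓd : DifferentiableAt ℝ Real.Gamma ((x + 1) / 2) :=
    Real.differentiableAt_Gamma fun m =>
      (neg_nonpos.mpr (Nat.cast_nonneg m)).trans_lt hpos |>.ne'
  have hc1 : ContinuousAt (fun α : ℝ => Real.Gamma ((α + 1) / 2)) x := by
    have hinner : ContinuousAt (fun α : ℝ => (α + 1) / 2) x :=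
      ((continuous_id.add continuous_const).div_const 2).continuousAt
    have hcomp : ContinuousAt (Real.Gamma ∘ (fun α : ℝ => (α + 1) / 2)) x :=
      ContinuousAt.comp hΓd.continuousAt hinner
    exact hcomp
  have hΓne : Real.Gamma ((x + 1) / 2) ≠ 0 := (Real.Gamma_pos_of_pos hpos).ne'
  have : ContinuousAt (tiG a) x := by
    unfold tiG
    exact ((hc1.log hΓne).add (by fun_prop))
  exact this.continuousWithinAt

lemma tiG_large (a : ℝ) (ha : 0 < a) (M : ℝ) :
    ∃ β : ℝ, M < β ∧ 0 < β ∧ 0 < tiG a β := by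
  set c := Real.log a + Real.log 2 / 2 with hc
  have hx : Tendsto (fun n : ℕ => (Real.exp (-2*c)) ^ n / (n.factorial : ℝ)) atTop (nhds 0) :=
    FloorSemiring.tendsto_pow_div_factorial_atTop _
  have hpos : 0 < Real.exp c / Real.sqrt Real.pi := by positivity
  have h1 : ∀ᶠ n : ℕ in atTop,
      (Real.exp (-2*c)) ^ n / (n.factorial : ℝ) < Real.exp c / Real.sqrt Real.pi :=
    hx.eventually (gt_mem_nhds hpos)
  obtain ⟨n₀, hn₀⟩ := exists_nat_gt M
  obtain ⟨n, hn1, hn2⟩ := (h1.and (eventually_ge_atTop n₀)).exists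
  refine ⟨2 * n + 1, ?_, by positivity, ?_⟩
  · have : (n₀ : ℝ) ≤ n := Nat.cast_le.mpr hn2
    push_cast
    linarith
  · have hfacpos : (0:ℝ) < (n.factorial : ℝ) := by positivity
    have hkey : Real.sqrt Real.pi < (n.factorial : ℝ) * Real.exp (c * (2 * n + 1)) := by
      rw [div_lt_div_iff₀ hfacpos (Real.sqrt_pos.mpr Real.pi_pos)] at hn1
      have hexp : (Real.exp (-2*c)) ^ n = Real.exp (-(2*c) * n) := by
        rw [← Real.exp_nat_mul]; ring_nf
      rw [hexp] at hn1
      have := hn1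
      -- exp(-(2c)n) * √π < exp c * n!  →  √π < n! * exp(c(2n+1))
      have h2 : Real.sqrt Real.pi < Real.exp c * (n.factorial : ℝ) * Real.exp ((2*c) * n) := by
        have hepos : 0 < Real.exp (-(2*c) * n) := Real.exp_pos _
        rw [← mul_lt_mul_iff_of_pos_right hepos]
        calc Real.sqrt Real.pi * Real.exp (-(2*c)*n)
            = Real.exp (-(2*c)*n) * Real.sqrt Real.pi := by ring
          _ < Real.exp c * (n.factorial : ℝ) := this
          _ = Real.exp c * (n.factorial : ℝ) * Real.exp ((2*c)*n) * Real.exp (-(2*c)*n) := by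
              rw [mul_assoc (Real.exp c * (n.factorial : ℝ)), ← Real.exp_add]; ring_nf; simp
      calc Real.sqrt Real.pi < Real.exp c * (n.factorial : ℝ) * Real.exp ((2*c) * n) := h2
        _ = (n.factorial : ℝ) * Real.exp (c * (2 * n + 1)) := by
            rw [mul_comm (Real.exp c), mul_assoc, ← Real.exp_add]; ring_nf
    have hlog := Real.log_lt_log (Real.sqrt_pos.mpr Real.pi_pos) hkey
    rw [Real.log_mul (ne_of_gt hfacpos) (Real.exp_ne_zero _), Real.log_exp] at hlog
    have harg : ((2 * (n:ℝ) + 1) + 1) / 2 = (n:ℝ) + 1 := by ring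
    have hΓ : Real.Gamma ((n:ℝ) + 1) = (n.factorial : ℝ) := by
      exact_mod_cast Real.Gamma_nat_eq_factorial n
    unfold tiG
    rw [show ((2 * (n:ℝ) + 1) + 1) / 2 = (n:ℝ) + 1 from harg, hΓ]
    rw [show Real.log a + Real.log 2 / 2 = c from hc.symm]
    linarith [hlog]


end Aux

open MeasureTheory

/-- For `m ~ N(0,1)` and `a > 0`, the equation `E[|a m|^α] = 1` has a unique
positive solution `α` iff `a < exp((1/2)(-ψ(1) + log 2)) = exp((γ + log 2)/2)`. -/
theorem tail_index_exists_iff (a : ℝ) (ha : 0 < a) :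
    (∃! α : ℝ, 0 < α ∧
        ∫ x, |a * x| ^ α ∂(ProbabilityTheory.gaussianReal 0 1) = 1)
      ↔ a < Real.exp ((1 / 2) * (Real.eulerMascheroniConstant + Real.log 2)) := by
  have hδiff : a < Real.exp ((1 / 2) * (Real.eulerMascheroniConstant + Real.log 2))
      ↔ Real.log a - (Real.eulerMascheroniConstant + Real.log 2) / 2 < 0 := by
    rw [← Real.log_lt_iff_lt_exp ha]
    constructor <;> intro h <;> linarith
  rw [hδiff]
  have hconv := tiG_convexOn a
  have hder := tiG_hasDerivAt_zero a
  have h0 := tiG_zero a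
  have key : ∀ α : ℝ, 0 < α →
      ((∫ x, |a * x| ^ α ∂(ProbabilityTheory.gaussianReal 0 1)) = 1 ↔ tiG a α = 0) := by
    intro α hα
    rw [ti_integral_aux a ha hα, ← tiG_exp a ha α (by linarith), Real.exp_eq_one_iff]
  have hslope_eq : ∀ x : ℝ, slope (tiG a) 0 x = tiG a x / x := by
    intro x
    rw [slope_def_field, h0]
    simp [div_eq_mul_inv]
  -- chord inequality helper: if 0 ≤ u < v ≤ w with tiG a v = tiG a w = 0 and u root points...
  constructor
  · rintro ⟨α₁, ⟨hα₁, hint⟩, huniq⟩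
    have hroot : tiG a α₁ = 0 := (key α₁ hα₁).1 hint
    have hslope : Real.log a - (Real.eulerMascheroniConstant + Real.log 2) / 2
        ≤ slope (tiG a) 0 α₁ :=
      hconv.le_slope_of_hasDerivAt self_mem_Ici (le_of_lt hα₁) hα₁ hder
    rw [hslope_eq, hroot, zero_div] at hslope
    rcases lt_or_eq_of_le hslope with h | h
    · exact h
    · exfalso
      have hhalf : 0 < α₁ / 2 := by linarith
      have hle : tiG a (α₁ / 2) ≤ 0 := by
        have hcomb := hconv.2 (self_mem_Ici (a := (0:ℝ))) (le_of_lt hα₁ : (0:ℝ) ≤ α₁)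
          (by norm_num : (0:ℝ) ≤ 1/2) (by norm_num : (0:ℝ) ≤ 1/2) (by norm_num)
        simp only [smul_eq_mul, mul_zero, zero_add, h0, hroot] at hcomb
        calc tiG a (α₁ / 2) = tiG a (1/2 * α₁) := by ring_nf
          _ ≤ 0 := by simpa using hcomb
      have hge : 0 ≤ tiG a (α₁ / 2) := by
        have h2 := hconv.le_slope_of_hasDerivAt self_mem_Ici (le_of_lt hhalf) hhalf hder
        rw [hslope_eq, h] at h2
        have h3 := mul_nonneg h2 (le_of_lt hhalf)
        rwa [div_mul_cancel₀ _ (ne_of_gt hhalf)] at h3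
      have : α₁ / 2 = α₁ :=
        huniq _ ⟨hhalf, (key _ hhalf).2 (le_antisymm hle hge)⟩
      linarith
  · intro hδneg
    -- eventually the slope near 0⁺ is negative
    have hsl := hasDerivAt_iff_tendsto_slope.mp hder
    have hmono : nhdsWithin (0:ℝ) (Set.Ioi 0) ≤ nhdsWithin (0:ℝ) {(0:ℝ)}ᶜ :=
      nhdsWithin_mono 0 (fun x hx => ne_of_gt hx)
    have hneg : ∀ᶠ x in nhdsWithin (0:ℝ) (Set.Ioi 0), slope (tiG a) 0 x < 0 :=
      (hsl.mono_left hmono).eventually (gt_mem_nhds hδneg)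
    -- a point with negative value
    have hnegval : ∀ᶠ x in nhdsWithin (0:ℝ) (Set.Ioi 0), 0 < x ∧ tiG a x < 0 := by
      filter_upwards [hneg, self_mem_nhdsWithin] with x hx hx0
      have hx0' : (0:ℝ) < x := hx0
      refine ⟨hx0', ?_⟩
      rw [hslope_eq] at hx
      have := mul_neg_of_neg_of_pos hx hx0'
      rwa [div_mul_cancel₀ _ (ne_of_gt hx0')] at this
    obtain ⟨β₁, hβ₁pos, hβ₁neg⟩ := hnegval.exists
    obtain ⟨β₂, hβ₁β₂, hβ₂pos, hβ₂val⟩ := tiG_large a ha β₁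
    -- IVT
    have hcont : ContinuousOn (tiG a) (Set.Icc β₁ β₂) :=
      (tiG_continuousOn a).mono (fun x hx => le_trans (le_of_lt hβ₁pos) hx.1)
    have hsub := intermediate_value_Icc (le_of_lt hβ₁β₂) hcont
    obtain ⟨α₀, hα₀mem, hα₀val⟩ := hsub ⟨le_of_lt hβ₁neg, le_of_lt hβ₂val⟩
    have hα₀pos : 0 < α₀ := lt_of_lt_of_le hβ₁pos hα₀mem.1
    refine ⟨α₀, ⟨hα₀pos, (key α₀ hα₀pos).2 hα₀val⟩, ?_⟩
    -- uniqueness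
    intro y hy
    obtain ⟨hypos, hyint⟩ := hy
    have hyroot : tiG a y = 0 := (key y hypos).1 hyint
    by_contra hne
    -- two distinct positive roots r₁ < r₂
    set r₁ := min y α₀ with hr₁
    set r₂ := max y α₀ with hr₂
    have hr₁pos : 0 < r₁ := lt_min hypos hα₀pos
    have hr₁r₂ : r₁ < r₂ := min_lt_max.mpr hne
    have hroot₁ : tiG a r₁ = 0 := by
      rcases min_choice y α₀ with h | h <;> rw [hr₁, h] <;> [exact hyroot; exact hα₀val]
    have hroot₂ : tiG a r₂ = 0 := by
      rcases max_choice y α₀ with h | h <;> rw [hr₂, h] <;> [exact hyroot; exact hα₀val]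
    -- get β ∈ (0, r₁) with tiG a β < 0
    have hIoo : Set.Ioo (0:ℝ) r₁ ∈ nhdsWithin (0:ℝ) (Set.Ioi 0) :=
      Ioo_mem_nhdsGT_of_mem ⟨le_refl 0, hr₁pos⟩
    obtain ⟨β, hβv, hβIoo⟩ := (hnegval.and (eventually_of_mem hIoo (fun x hx => hx))).exists
    obtain ⟨hβpos, hβneg⟩ := hβv
    have hβr₁ : β < r₁ := hβIoo.2
    -- convexity contradiction with points β < r₁ < r₂
    have hd : (0:ℝ) < r₂ - β := by linarith
    set t := (r₂ - r₁) / (r₂ - β) with ht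
    set s := (r₁ - β) / (r₂ - β) with hs
    have htpos : 0 < t := div_pos (by linarith) hd
    have hsnn : 0 ≤ s := div_nonneg (by linarith) (le_of_lt hd)
    have hts : t + s = 1 := by
      rw [ht, hs, ← add_div, div_eq_one_iff_eq (ne_of_gt hd)]
      ring
    have hcombeq : t • β + s • r₂ = r₁ := by
      rw [ht, hs, smul_eq_mul, smul_eq_mul]
      field_simp
      ring
    have hchord := hconv.2 (le_of_lt hβpos : (0:ℝ) ≤ β)
      (by positivity : (0:ℝ) ≤ r₂) (le_of_lt htpos) hsnn hts
    rw [hcombeq] at hchord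
    rw [hroot₁, hroot₂] at hchord
    simp only [smul_eq_mul, mul_zero, add_zero] at hchord
    nlinarith
end

section
/- Let X, Y be independent nonnegative random variables, X regularly varying: P(X > x) ~ c x^{-α} with c > 0, α > 0, and Y with E[Y^{α+ε}] < ∞ for some ε > 0 and P(Y > 0) > 0. Then P(XY > x) ~ c E[Y^α] x^{-α} as x → ∞ (Breiman's lemma with explicit constant tail). -/
open MeasureTheory Filter

/-- Breiman's lemma with explicit constant: if `X, Y ≥ 0` are independent,
`P(X > x) ~ c x^{-α}` with `c, α > 0`, and `E[Y^{α+ε}] < ∞` for some `ε > 0` with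
`P(Y > 0) > 0`, then `P(XY > x) ~ c E[Y^α] x^{-α}`, i.e.
`x^α P(XY > x) → c E[Y^α]`. -/
theorem breiman {Ω : Type*} [MeasurableSpace Ω] (μ : Measure Ω) [IsProbabilityMeasure μ]
    (X Y : Ω → ℝ) (hXmeas : Measurable X) (hYmeas : Measurable Y)
    (hXpos : ∀ ω, 0 ≤ X ω) (hYpos : ∀ ω, 0 ≤ Y ω)
    (hindep : ProbabilityTheory.IndepFun X Y μ)
    (c α : ℝ) (hc : 0 < c) (hα : 0 < α)
    (hX : Tendsto (fun x : ℝ => x ^ α * (μ {ω | X ω > x}).toReal) atTop (nhds c))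
    (ε : ℝ) (hε : 0 < ε)
    (hY : Integrable (fun ω => Y ω ^ (α + ε)) μ)
    (hYnz : 0 < μ {ω | 0 < Y ω}) :
    Tendsto (fun x : ℝ => x ^ α * (μ {ω | X ω * Y ω > x}).toReal) atTop
      (nhds (c * ∫ ω, Y ω ^ α ∂μ)) := by
  set m : Measure ℝ := μ.map X with hm
  set ν : Measure ℝ := μ.map Y with hν
  haveI : IsProbabilityMeasure m := Measure.isProbabilityMeasure_map hXmeas.aemeasurable
  haveI : IsProbabilityMeasure ν := Measure.isProbabilityMeasure_map hYmeas.aemeasurable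
  -- the tail of X expressed via m
  have hmtail : ∀ t : ℝ, m (Set.Ioi t) = μ {ω | X ω > t} := by
    intro t
    rw [hm, Measure.map_apply hXmeas measurableSet_Ioi]; rfl
  -- a.e. y ≥ 0 under ν
  have hν_nonneg : ∀ᵐ y ∂ν, y ∈ Set.Ici (0 : ℝ) :=
    (ae_map_iff hYmeas.aemeasurable measurableSet_Ici).mpr
      (Filter.Eventually.of_forall hYpos)
  -- key independence identity
  have key : ∀ x : ℝ, μ {ω | X ω * Y ω > x} = ∫⁻ y, m {u | u * y > x} ∂ν := by
    intro x
    have hs : MeasurableSet {p : ℝ × ℝ | p.1 * p.2 > x} :=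
      measurableSet_lt measurable_const (measurable_fst.mul measurable_snd)
    have hmap := (ProbabilityTheory.indepFun_iff_map_prod_eq_prod_map_map
      hXmeas.aemeasurable hYmeas.aemeasurable).mp hindep
    calc μ {ω | X ω * Y ω > x}
        = μ.map (fun ω => (X ω, Y ω)) {p : ℝ × ℝ | p.1 * p.2 > x} := by
          rw [Measure.map_apply (hXmeas.prodMk hYmeas) hs]; rfl
      _ = (m.prod ν) {p : ℝ × ℝ | p.1 * p.2 > x} := by rw [hmap]
      _ = ∫⁻ y, m {u | u * y > x} ∂ν := by rw [Measure.prod_apply_symm hs]; rfl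
  -- the family of integrands
  set F : ℝ → ℝ → ℝ := fun x y => x ^ α * (m {u | u * y > x}).toReal with hF
  have hg_meas : ∀ x : ℝ, Measurable fun y => m {u | u * y > x} := by
    intro x
    have hs : MeasurableSet {p : ℝ × ℝ | p.1 * p.2 > x} :=
      measurableSet_lt measurable_const (measurable_fst.mul measurable_snd)
    exact measurable_measure_prodMk_right hs
  have hF_meas : ∀ x : ℝ, AEStronglyMeasurable (F x) ν := fun x =>
    (((hg_meas x).ennreal_toReal).const_mul _).aestronglyMeasurable
  -- rewriting the quantity of interest as an integral
  have heq : ∀ x : ℝ, x ^ α * (μ {ω | X ω * Y ω > x}).toReal = ∫ y, F x y ∂ν := by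
    intro x
    rw [key x, ← integral_toReal (hg_meas x).aemeasurable
      (Filter.Eventually.of_forall fun y => (measure_lt_top m _)), ← integral_const_mul]
  -- the dominating function
  obtain ⟨x₀, hx₀1, hx₀⟩ : ∃ x₀ : ℝ, 1 ≤ x₀ ∧ ∀ t ≥ x₀,
      t ^ α * (μ {ω | X ω > t}).toReal ≤ c + 1 := by
    have := hX.eventually (eventually_le_nhds (lt_add_one c))
    rcases (this.and (eventually_ge_atTop (1 : ℝ))).exists_forall_of_atTop with ⟨x₀, hx₀⟩
    exact ⟨max x₀ 1, le_max_right _ _,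
      fun t ht => (hx₀ t (le_trans (le_max_left _ _) ht)).1⟩
  set M : ℝ := max (c + 1) (x₀ ^ α) with hM
  have hM0 : 0 ≤ M := le_trans (by linarith) (le_max_left _ _)
  set bound : ℝ → ℝ := fun y => M * (1 + y ^ (α + ε)) with hbound_def
  have hbound_int : Integrable bound ν := by
    have h1 : Integrable (fun y : ℝ => y ^ (α + ε)) ν := by
      rw [hν, integrable_map_measure
        ((Real.continuous_rpow_const (by linarith)).measurable.aestronglyMeasurable)
        hYmeas.aemeasurable]
      exact hY
    exact ((integrable_const (1 : ℝ)).add h1).const_mul M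
  -- the uniform bound
  have h_bound : ∀ᶠ x in atTop, ∀ᵐ y ∂ν, ‖F x y‖ ≤ bound y := by
    filter_upwards [eventually_ge_atTop x₀] with x hx
    filter_upwards [hν_nonneg] with y hy
    have hx0 : 0 < x := lt_of_lt_of_le (by linarith) hx
    have hFpos : 0 ≤ F x y :=
      mul_nonneg (Real.rpow_nonneg hx0.le _) ENNReal.toReal_nonneg
    rw [Real.norm_of_nonneg hFpos]
    have hyα : y ^ α ≤ 1 + y ^ (α + ε) := by
      rcases le_total y 1 with h1 | h1
      · have := Real.rpow_le_one hy h1 hα.le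
        have := Real.rpow_nonneg hy (α + ε)
        linarith
      · have := Real.rpow_le_rpow_of_exponent_le h1 (by linarith : α ≤ α + ε)
        linarith
    have main : F x y ≤ M * y ^ α := by
      rcases eq_or_lt_of_le (Set.mem_Ici.mp hy) with h0 | h0
      · have : {u : ℝ | u * y > x} = ∅ := by
          ext u; simp [← h0, not_lt.mpr hx0.le, lt_asymm hx0]
        simp [hF, this, mul_nonneg hM0 (Real.rpow_nonneg hy _)]
      · -- y > 0
        have hset : {u : ℝ | u * y > x} = Set.Ioi (x / y) := by
          ext u; simpa [Set.mem_Ioi] using (div_lt_iff₀ h0).symm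
        have hxy0 : 0 < x / y := div_pos hx0 h0
        rcases le_or_gt x₀ (x / y) with ht | ht
        · -- use the tail bound
          have hkey : F x y = y ^ α * ((x / y) ^ α * (μ {ω | X ω > x / y}).toReal) := by
            rw [hF]
            simp only [hset, hmtail]
            rw [Real.div_rpow hx0.le h0.le]
            field_simp
          rw [hkey]
          calc y ^ α * ((x / y) ^ α * (μ {ω | X ω > x / y}).toReal)
              ≤ y ^ α * (c + 1) := by
                exact mul_le_mul_of_nonneg_left (hx₀ _ ht) (Real.rpow_nonneg h0.le _)
            _ ≤ y ^ α * M := by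
                exact mul_le_mul_of_nonneg_left (le_max_left _ _) (Real.rpow_nonneg h0.le _)
            _ = M * y ^ α := mul_comm _ _
        · -- x < x₀ * y
          have hxlt : x < x₀ * y := by
            rw [div_lt_iff₀ h0] at ht; exact ht
          have h1 : x ^ α ≤ (x₀ * y) ^ α :=
            Real.rpow_le_rpow hx0.le hxlt.le hα.le
          have h2 : (x₀ * y) ^ α = x₀ ^ α * y ^ α :=
            Real.mul_rpow (by linarith) h0.le
          have h3 : (m {u | u * y > x}).toReal ≤ 1 := by
            have h4 : m {u | u * y > x} ≤ 1 := prob_le_one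
            exact ENNReal.toReal_le_of_le_ofReal one_pos.le (by simpa using h4)
          calc F x y ≤ x ^ α * 1 :=
                mul_le_mul_of_nonneg_left h3 (Real.rpow_nonneg hx0.le _)
            _ = x ^ α := mul_one _
            _ ≤ x₀ ^ α * y ^ α := by rw [← h2]; exact h1
            _ ≤ M * y ^ α :=
                mul_le_mul_of_nonneg_right (le_max_right _ _) (Real.rpow_nonneg h0.le _)
    calc F x y ≤ M * y ^ α := main
      _ ≤ M * (1 + y ^ (α + ε)) := mul_le_mul_of_nonneg_left hyα hM0
  -- pointwise limit
  have h_lim : ∀ᵐ y ∂ν, Tendsto (fun x => F x y) atTop (nhds (c * y ^ α)) := by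
    filter_upwards [hν_nonneg] with y hy
    rcases eq_or_lt_of_le (Set.mem_Ici.mp hy) with h0 | h0
    · obtain rfl : y = 0 := h0.symm
      have hev : ∀ᶠ x in atTop, F x 0 = 0 := by
        filter_upwards [eventually_gt_atTop (0 : ℝ)] with x hx0
        have hset : {u : ℝ | u * (0 : ℝ) > x} = ∅ := by
          ext u; simp [not_lt.mpr hx0.le]
        have hFe : F x 0 = x ^ α * (m {u : ℝ | u * (0 : ℝ) > x}).toReal := rfl
        rw [hFe, hset]
        simp
      rw [Real.zero_rpow hα.ne', mul_zero]
      exact Tendsto.congr' (hev.mono fun x hx => hx.symm) tendsto_const_nhds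
    · have hlim2 : Tendsto (fun x : ℝ => y ^ α *
          ((x / y) ^ α * (μ {ω | X ω > x / y}).toReal)) atTop (nhds (y ^ α * c)) := by
        exact (hX.comp (tendsto_id.atTop_div_const h0)).const_mul _
      have heq2 : ∀ᶠ x in atTop, y ^ α *
          ((x / y) ^ α * (μ {ω | X ω > x / y}).toReal) = F x y := by
        filter_upwards [eventually_gt_atTop (0 : ℝ)] with x hx0
        have hset : {u : ℝ | u * y > x} = Set.Ioi (x / y) := by
          ext u; simpa [Set.mem_Ioi] using (div_lt_iff₀ h0).symm
        rw [hF]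
        simp only [hset, hmtail]
        rw [Real.div_rpow hx0.le h0.le]
        field_simp
      rw [mul_comm c]
      exact Tendsto.congr' heq2 hlim2
  -- apply dominated convergence
  have hDCT := tendsto_integral_filter_of_dominated_convergence bound
    (Filter.Eventually.of_forall hF_meas) h_bound hbound_int h_lim
  have hfinal : ∫ y, c * y ^ α ∂ν = c * ∫ ω, Y ω ^ α ∂μ := by
    rw [integral_const_mul, hν, integral_map hYmeas.aemeasurable
      ((Real.continuous_rpow_const hα.le).measurable.aestronglyMeasurable)]
  rw [← hfinal]
  exact Tendsto.congr (fun x => (heq x).symm) hDCT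
end
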